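/- Suppose the level-(ℓ−1) code ensemble with parameters (F', k') satisfies: for every w' ∈ {0,1}^{k'} and every query set Q' of size at most q^{ℓ−1}, the restrictions to Q' of the distributions D_yes^{ℓ−1}(w') (uniform over E^{ℓ−1}(w')) and D_no^{ℓ−1} are identical. Then for every w ∈ {0,1}^k and every query set Q of size at most (|F∖H|/10)·q^{ℓ−1}, the restrictions to Q of D_yes^ℓ(w) and D_no^ℓ are identical, where D_yes^ℓ(w) samples a uniformly random degree ≤ |F|/2 polynomial g with g|_H = w and then independently a uniformly random element of E^{ℓ−1}(⟨g(β)⟩) for each β ∈ F∖H, and D_no^ℓ samples a uniformly random function λ : F∖H → F and then independently a uniformly random element of E^{ℓ−1}(⟨λ(β)⟩) for each β. -/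

import Mathlib

open scoped Classical

open Finset in
lemma fiber_card_const {α γ : Type} [Fintype α] [AddCommGroup α] [AddCommGroup γ]
    (E : α → γ) (hadd : ∀ a b, E (a + b) = E a + E b)
    (hsur : Function.Surjective E) (u v : γ) :
    Nat.card {a // E a = u} = Nat.card {a // E a = v} := by
  obtain ⟨a0, ha0⟩ := hsur u
  obtain ⟨b0, hb0⟩ := hsur v
  have hsub : ∀ a b, E (a - b) = E a - E b := by
    intro a b
    have h := hadd (a - b) b
    rw [sub_add_cancel] at h
    exact eq_sub_of_add_eq h.symm
  apply Nat.card_congr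
  refine ⟨fun x => ⟨x.1 - a0 + b0, ?_⟩, fun x => ⟨x.1 - b0 + a0, ?_⟩, ?_, ?_⟩
  · rw [hadd, hsub, x.2, ha0, hb0]; abel
  · rw [hadd, hsub, x.2, ha0, hb0]; abel
  · intro x; apply Subtype.ext; simp
  · intro x; apply Subtype.ext; simp

open Finset in
lemma sum_fiber_mul {α γ : Type} [Fintype α] [Fintype γ] [DecidableEq γ]
    (g : α → γ) (p : α → Prop) [DecidablePred p] (f : γ → ENNReal) :
    ∑ a ∈ Finset.univ.filter p, f (g a)
      = ∑ t : γ, (Nat.card {a // p a ∧ g a = t} : ENNReal) * f t := by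
  rw [← Finset.sum_fiberwise_of_maps_to' (fun a _ => Finset.mem_univ (g a)) f]
  refine Finset.sum_congr rfl fun t _ => ?_
  rw [Finset.sum_const, nsmul_eq_mul]
  congr 1
  rw [Nat.card_eq_fintype_card, Fintype.card_subtype, Finset.filter_filter]

open Finset in
lemma card_decomp {α γ : Type} [Fintype α] [Fintype γ] [DecidableEq γ]
    (g : α → γ) (p : α → Prop) [DecidablePred p] :
    (Finset.univ.filter p).card = ∑ t : γ, Nat.card {a // p a ∧ g a = t} := by
  rw [Finset.card_eq_sum_card_fiberwise (fun a _ => Finset.mem_univ (g a))]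
  refine Finset.sum_congr rfl fun t _ => ?_
  rw [Nat.card_eq_fintype_card, Fintype.card_subtype, Finset.filter_filter]

lemma ennreal_helper (M K : ℕ) (hK : K ≠ 0) (X : ENNReal) :
    ((M * K : ℕ) : ENNReal)⁻¹ * ((K : ENNReal) * X) = ((M : ℕ) : ENNReal)⁻¹ * X := by
  push_cast
  rw [ENNReal.mul_inv (Or.inr (ENNReal.natCast_ne_top K)) (Or.inl (ENNReal.natCast_ne_top M)),
    mul_assoc, ← mul_assoc ((K : ENNReal))⁻¹,
    ENNReal.inv_mul_cancel (by exact_mod_cast hK) (ENNReal.natCast_ne_top K), one_mul]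

lemma eval_surj (F : Type) [Field F] [DecidableEq F] (d : ℕ) (s : Finset F)
    (hs : s.card ≤ d + 1) (u : F → F) :
    ∃ a : Fin (d + 1) → F, ∀ x ∈ s, ∑ i, a i * x ^ (i : ℕ) = u x := by
  set p := Lagrange.interpolate s id u with hp
  have hdeg : p.natDegree < d + 1 := by
    rcases eq_or_ne p 0 with h | h
    · rw [h]; simp
    · rw [Polynomial.natDegree_lt_iff_degree_lt h]
      calc p.degree < (s.card : WithBot ℕ) :=
            Lagrange.degree_interpolate_lt u (Function.injective_id.injOn)
        _ ≤ ((d + 1 : ℕ) : WithBot ℕ) := by exact_mod_cast Nat.cast_le.mpr hs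
  refine ⟨fun i => p.coeff i, fun x hx => ?_⟩
  rw [Fin.sum_univ_eq_sum_range (fun i => p.coeff i * x ^ i) (d + 1),
    ← Polynomial.eval_eq_sum_range' hdeg]
  exact Lagrange.eval_interpolate_at_node u (Function.injective_id.injOn) hx


lemma main_calc {A ι F' W : Type} [Fintype A] [Fintype ι] [DecidableEq ι]
    [Fintype F'] [Fintype W] [Nonempty F']
    [AddCommGroup A] [AddCommGroup W] [AddCommGroup F']
    (P : A → Prop) [instS : Fintype {a : A // P a}] (eH : A → W) (w : W) (B : Finset ι)
    (eB : A → ({ β // β ∈ B } → F'))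
    (hP : ∀ a, P a ↔ eH a = w)
    (haddH : ∀ a b, eH (a + b) = eH a + eH b)
    (haddB : ∀ a b, eB (a + b) = eB a + eB b)
    (hsur : Function.Surjective (fun a => (eH a, eB a)))
    (D : F' → ι → ENNReal) (N : ι → ENNReal) (ev : A → ι → F')
    (hev : ∀ a (β : { β // β ∈ B }), ev a β.1 = eB a β)
    (hsmall : ∀ c β, β ∉ B → D c β = N β) :
    (Fintype.card {a : A // P a} : ENNReal)⁻¹ *
        ∑ a : {a : A // P a}, ∏ β, D (ev a.1 β) β
      = (Fintype.card (ι → F') : ENNReal)⁻¹ *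
        ∑ lam : ι → F', ∏ β, D (lam β) β := by
  classical
  set EE : A → W × ({ β // β ∈ B } → F') := fun a => (eH a, eB a) with hEEdef
  have hEEadd : ∀ a b, EE (a + b) = EE a + EE b := by
    intro a b
    refine Prod.ext ?_ ?_ <;> simp [hEEdef, haddH, haddB]
  set rB : (ι → F') → ({ β // β ∈ B } → F') := fun lam β => lam β.1 with hrBdef
  have hrsur : Function.Surjective rB := by
    intro t
    refine ⟨fun β => if hβ : β ∈ B then t ⟨β, hβ⟩ else 0, ?_⟩
    funext β
    simp [hrBdef, dif_pos β.2]
  -- the common "split" computation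
  have hsplit : ∀ (g : ι → F') (e : { β // β ∈ B } → F'), (∀ β : { β // β ∈ B }, g β.1 = e β) →
      ∏ β, D (g β) β
        = (∏ β : { β // β ∈ B }, D (e β) β.1) * ∏ β ∈ Bᶜ, N β := by
    intro g e hge
    rw [← Finset.prod_mul_prod_compl B (fun β => D (g β) β)]
    congr 1
    · rw [Finset.prod_subtype B (fun x => Iff.rfl) (fun β => D (g β) β)]
      exact Finset.prod_congr rfl fun β _ => by rw [hge β]
    · exact Finset.prod_congr rfl fun β hβ => hsmall (g β) β (Finset.mem_compl.mp hβ)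
  set f : ({ β // β ∈ B } → F') → ENNReal :=
    fun t => (∏ β : { β // β ∈ B }, D (t β) β.1) * ∏ β ∈ Bᶜ, N β with hfdef
  set M : ℕ := Fintype.card ({ β // β ∈ B } → F') with hM
  set K : ℕ := Nat.card {a : A // EE a = (w, 0)} with hKdef
  set K' : ℕ := Nat.card {lam : ι → F' // rB lam = 0} with hK'def
  have hKne : K ≠ 0 := by
    obtain ⟨a, ha⟩ := hsur (w, 0)
    have : Nonempty {a : A // EE a = (w, 0)} := ⟨⟨a, ha⟩⟩
    rw [hKdef]
    exact Nat.card_pos.ne'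
  have hK'ne : K' ≠ 0 := by
    obtain ⟨lam, hlam⟩ := hrsur 0
    have : Nonempty {lam : ι → F' // rB lam = 0} := ⟨⟨lam, hlam⟩⟩
    rw [hK'def]
    exact Nat.card_pos.ne'
  have hfib : ∀ t, Nat.card {a : A // P a ∧ eB a = t} = K := by
    intro t
    rw [hKdef]
    refine Eq.trans (Nat.card_congr (Equiv.subtypeEquivRight fun a => ?_))
      (fiber_card_const EE hEEadd hsur (w, t) (w, 0))
    rw [hEEdef]
    simp only [Prod.ext_iff]
    rw [hP a]
  have hfib' : ∀ t, Nat.card {lam : ι → F' // True ∧ rB lam = t} = K' := by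
    intro t
    rw [hK'def]
    refine Eq.trans (Nat.card_congr (Equiv.subtypeEquivRight fun lam => by simp))
      (fiber_card_const rB (fun a b => rfl) hrsur t 0)
  have hcardS : Nat.card {a : A // P a} = M * K := by
    have h4 : Nat.card {a : A // P a} = (Finset.univ.filter P).card := by
      rw [Nat.card_eq_fintype_card]
      exact Fintype.card_of_subtype (Finset.univ.filter P) (by simp)
    rw [h4, card_decomp eB P, Finset.sum_congr rfl (fun t _ => hfib t), Finset.sum_const, smul_eq_mul,
      Finset.card_univ, hM]
  have hcardL : Nat.card (ι → F') = M * K' := by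
    have h1 : (Finset.univ.filter (fun _ : ι → F' => True)).card
        = ∑ t : { β // β ∈ B } → F', Nat.card {lam : ι → F' // True ∧ rB lam = t} :=
      card_decomp rB (fun _ => True)
    rw [Finset.filter_true, Finset.card_univ, ← Nat.card_eq_fintype_card] at h1
    rw [h1, Finset.sum_congr rfl (fun t _ => hfib' t), Finset.sum_const, smul_eq_mul,
      Finset.card_univ, hM]
  -- left side
  have hL : ∑ a : {a : A // P a}, ∏ β, D (ev a.1 β) β = (K : ENNReal) * ∑ t, f t := by
    rw [← Finset.sum_subtype (Finset.univ.filter P) (fun a => by simp)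
      (fun a => ∏ β, D (ev a β) β)]
    rw [Finset.sum_congr rfl (fun a _ => hsplit (ev a) (eB a) (hev a))]
    rw [show (∑ a ∈ Finset.univ.filter P,
        ((∏ β : { β // β ∈ B }, D (eB a β) β.1) * ∏ β ∈ Bᶜ, N β))
      = ∑ a ∈ Finset.univ.filter P, f (eB a) from rfl]
    rw [sum_fiber_mul eB P f]
    rw [Finset.sum_congr rfl (fun t _ => by rw [hfib t]), ← Finset.mul_sum]
  -- right side
  have hR : ∑ lam : ι → F', ∏ β, D (lam β) β = (K' : ENNReal) * ∑ t, f t := by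
    have h0 : ∑ lam : ι → F', ∏ β, D (lam β) β
        = ∑ lam ∈ Finset.univ.filter (fun _ : ι → F' => True), f (rB lam) := by
      rw [Finset.filter_true]
      exact Finset.sum_congr rfl (fun lam _ => hsplit lam (rB lam) (fun β => rfl))
    rw [h0, sum_fiber_mul rB (fun _ => True) f,
      Finset.sum_congr rfl (fun t _ => by rw [hfib' t]), ← Finset.mul_sum]
  rw [hL, hR, ← Nat.card_eq_fintype_card (α := {a : A // P a}),
    ← Nat.card_eq_fintype_card (α := ι → F'), hcardS, hcardL,
    ennreal_helper M K hKne, ennreal_helper M K' hK'ne]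

/-- The product of finitely many PMFs: independent samples in each coordinate. -/
noncomputable def pmfPi {ι α : Type} [Fintype ι] [DecidableEq ι] [Fintype α]
    (p : ι → PMF α) : PMF (ι → α) :=
  PMF.ofFintype (fun f => ∏ i, p i (f i)) (by
    rw [← Fintype.prod_sum (fun (i : ι) (a : α) => p i a)]
    have h1 : ∀ i : ι, ∑ a : α, p i a = 1 := fun i => by
      rw [← tsum_fintype (L := SummationFilter.unconditional α)]; exact (p i).tsum_coe
    simp [h1])

lemma map_pmfPi_restrict {ι : Type} [Fintype ι] [DecidableEq ι] {m : ℕ}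
    (p : ι → PMF (Fin m → Bool)) (Q : Finset (ι × Fin m))
    (y : { x : ι × Fin m // x ∈ Q } → Bool) :
    (PMF.map (fun v : ι → Fin m → Bool =>
        fun x : { x : ι × Fin m // x ∈ Q } => v x.1.1 x.1.2) (pmfPi p)) y
      = ∏ β : ι,
          (PMF.map (fun u : Fin m → Bool =>
              fun j : { j : Fin m // j ∈ Finset.univ.filter (fun j => (β, j) ∈ Q) } => u j.1)
            (p β))
          (fun j => y ⟨(β, j.1), (Finset.mem_filter.mp j.2).2⟩) := by
  simp only [PMF.map_apply, tsum_fintype]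
  rw [Finset.prod_univ_sum]
  rw [Fintype.piFinset_univ]
  refine Finset.sum_congr rfl fun v _ => ?_
  by_cases h : y = fun x : { x : ι × Fin m // x ∈ Q } => v x.1.1 x.1.2
  · rw [if_pos h]
    rw [show (pmfPi p) v = ∏ β, p β (v β) from PMF.ofFintype_apply _ _]
    refine Finset.prod_congr rfl fun β _ => ?_
    rw [if_pos]
    funext j
    exact congrFun h ⟨(β, j.1), (Finset.mem_filter.mp j.2).2⟩
  · rw [if_neg h]
    obtain ⟨x, hx⟩ : ∃ x, y x ≠ v x.1.1 x.1.2 := by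
      by_contra hc
      push_neg at hc
      exact h (funext hc)
    refine (Finset.prod_eq_zero (Finset.mem_univ x.1.1) ?_).symm
    rw [if_neg]
    intro hcond
    have hj : x.1.2 ∈ Finset.univ.filter (fun j => (x.1.1, j) ∈ Q) :=
      Finset.mem_filter.mpr ⟨Finset.mem_univ _, x.2⟩
    have h2 := congrFun hcond ⟨x.1.2, hj⟩
    apply hx
    convert h2 using 2

set_option maxHeartbeats 2000000 in
theorem stmt14 (F : Type) [Field F] [Fintype F] [DecidableEq F]
    (H : Finset F) (hH : 3 * H.card ≤ Fintype.card F)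
    (m q' : ℕ)
    (Dyes' : F → PMF (Fin m → Bool)) (Dno' : PMF (Fin m → Bool))
    (hblock : ∀ a : F, ∀ Q' : Finset (Fin m), Q'.card ≤ q' →
      PMF.map (fun x => fun j : { j : Fin m // j ∈ Q' } => x j.1) (Dyes' a)
        = PMF.map (fun x => fun j : { j : Fin m // j ∈ Q' } => x j.1) Dno')
    (w : { x : F // x ∈ H } → F)
    (hne : Nonempty { a : Fin (Fintype.card F / 2 + 1) → F //
      ∀ x : { x : F // x ∈ H }, ∑ i, a i * (x.1 : F) ^ (i : ℕ) = w x })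
    (Q : Finset ({ β : F // β ∉ H } × Fin m))
    (hQ : (Q.card : ℝ) ≤ ((Fintype.card F - H.card : ℕ) : ℝ) / 10 * q') :
    PMF.map (fun v : { β : F // β ∉ H } → Fin m → Bool =>
        fun x : { x : { β : F // β ∉ H } × Fin m // x ∈ Q } => v x.1.1 x.1.2)
      ((@PMF.uniformOfFintype
          { a : Fin (Fintype.card F / 2 + 1) → F //
            ∀ x : { x : F // x ∈ H }, ∑ i, a i * (x.1 : F) ^ (i : ℕ) = w x } _ hne).bind
        (fun a => pmfPi (fun β : { β : F // β ∉ H } =>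
          Dyes' (∑ i, a.1 i * (β.1 : F) ^ (i : ℕ)))))
    = PMF.map (fun v : { β : F // β ∉ H } → Fin m → Bool =>
        fun x : { x : { β : F // β ∉ H } × Fin m // x ∈ Q } => v x.1.1 x.1.2)
      ((PMF.uniformOfFintype ({ β : F // β ∉ H } → F)).bind
        (fun lam => pmfPi (fun β : { β : F // β ∉ H } => Dyes' (lam β)))) := by
  classical
  -- block query sets and big clusters
  set Qb : { β : F // β ∉ H } → Finset (Fin m) :=
    fun β => Finset.univ.filter (fun j => (β, j) ∈ Q) with hQb
  set B : Finset { β : F // β ∉ H } :=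
    Finset.univ.filter (fun β => q' < (Qb β).card) with hBdef
  -- cardinality bound on big clusters
  have hQsum : ∑ β : { β : F // β ∉ H }, (Qb β).card = Q.card := by
    rw [Finset.card_eq_sum_card_fiberwise (f := Prod.fst) (fun x _ => Finset.mem_univ x.1)]
    refine Finset.sum_congr rfl fun β _ => ?_
    refine Finset.card_bij (fun j _ => (β, j)) ?_ ?_ ?_
    · intro j hj
      exact Finset.mem_filter.mpr ⟨(Finset.mem_filter.mp hj).2, rfl⟩
    · intro j₁ h₁ j₂ h₂ he
      exact (Prod.mk.injEq _ _ _ _).mp he |>.2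
    · intro x hx
      obtain ⟨hxQ, hx1⟩ := Finset.mem_filter.mp hx
      refine ⟨x.2, Finset.mem_filter.mpr ⟨Finset.mem_univ _, ?_⟩, ?_⟩
      · rw [← hx1]; exact hxQ
      · obtain ⟨x1, x2⟩ := x
        subst hx1
        rfl
  have hB1 : B.card * (q' + 1) ≤ Q.card := by
    calc B.card * (q' + 1) = ∑ _β ∈ B, (q' + 1) := by rw [Finset.sum_const, smul_eq_mul]
      _ ≤ ∑ β ∈ B, (Qb β).card :=
          Finset.sum_le_sum (fun β hβ => (Finset.mem_filter.mp hβ).2)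
      _ ≤ ∑ β, (Qb β).card := Finset.sum_le_sum_of_subset (Finset.subset_univ B)
      _ = Q.card := hQsum
  have h10 : 10 * B.card ≤ Fintype.card F - H.card := by
    have h1 : (B.card : ℝ) * (q' + 1)
        ≤ ((Fintype.card F - H.card : ℕ) : ℝ) / 10 * (q' + 1) := by
      calc (B.card : ℝ) * (q' + 1) ≤ (Q.card : ℝ) := by exact_mod_cast hB1
        _ ≤ ((Fintype.card F - H.card : ℕ) : ℝ) / 10 * q' := hQ
        _ ≤ _ := by
            have h0 : (0:ℝ) ≤ ((Fintype.card F - H.card : ℕ) : ℝ) / 10 := by positivity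
            nlinarith
    have h2 : (B.card : ℝ) ≤ ((Fintype.card F - H.card : ℕ) : ℝ) / 10 :=
      le_of_mul_le_mul_right h1 (by positivity)
    have h3 : (10 * B.card : ℝ) ≤ ((Fintype.card F - H.card : ℕ) : ℝ) := by linarith
    exact_mod_cast h3
  have hHcard : H.card ≤ Fintype.card F := Finset.card_le_univ H
  have hcardB : H.card + B.card ≤ Fintype.card F / 2 + 1 := by omega
  -- the evaluation maps
  set EB : (Fin (Fintype.card F / 2 + 1) → F) → ({ β // β ∈ B } → F) :=
    fun a β => ∑ i, a i * (β.1.1 : F) ^ (i : ℕ) with hEB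
  set EE : (Fin (Fintype.card F / 2 + 1) → F) →
      ({ x : F // x ∈ H } → F) × ({ β // β ∈ B } → F) :=
    fun a => (fun x => ∑ i, a i * (x.1 : F) ^ (i : ℕ), EB a) with hEE
  have hEEadd : ∀ a b, EE (a + b) = EE a + EE b := by
    intro a b
    refine Prod.ext ?_ ?_ <;> funext x <;>
      simp [hEE, hEB, add_mul, Finset.sum_add_distrib]
  have hEEsur : Function.Surjective EE := by
    rintro ⟨u, t⟩
    set s : Finset F := H ∪ B.image (fun β => β.1) with hs
    have hscard : s.card ≤ Fintype.card F / 2 + 1 := by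
      refine le_trans (Finset.card_union_le _ _) (le_trans ?_ hcardB)
      exact Nat.add_le_add_left (Finset.card_image_le) _
    obtain ⟨a, ha⟩ := eval_surj F (Fintype.card F / 2) s hscard
      (fun x => if hx : x ∈ H then u ⟨x, hx⟩
        else if hb : (⟨x, hx⟩ : { β : F // β ∉ H }) ∈ B then t ⟨⟨x, hx⟩, hb⟩ else 0)
    refine ⟨a, Prod.ext ?_ ?_⟩
    · funext x
      have hxs : x.1 ∈ s := Finset.mem_union_left _ x.2
      have h1 := ha x.1 hxs
      simp only [dif_pos x.2] at h1
      exact h1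
    · funext β
      obtain ⟨⟨b, hb⟩, hBb⟩ := β
      have hbs : b ∈ s := Finset.mem_union_right _ (Finset.mem_image.mpr ⟨⟨b, hb⟩, hBb, rfl⟩)
      have h1 := ha b hbs
      rw [dif_neg hb, dif_pos hBb] at h1
      exact h1
  -- restriction map on λ's
  set rB : ({ β : F // β ∉ H } → F) → ({ β // β ∈ B } → F) :=
    fun lam β => lam β.1 with hrB
  have hradd : ∀ a b, rB (a + b) = rB a + rB b := fun a b => rfl
  have hrsur : Function.Surjective rB := by
    intro t
    exact ⟨fun β => if hβ : β ∈ B then t ⟨β, hβ⟩ else 0, by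
      funext β; simp [hrB, dif_pos β.2]⟩
  apply PMF.ext
  intro y
  rw [PMF.map_bind, PMF.map_bind, PMF.bind_apply, PMF.bind_apply, tsum_fintype, tsum_fintype]
  simp only [map_pmfPi_restrict, PMF.uniformOfFintype_apply]
  rw [← Finset.mul_sum, ← Finset.mul_sum]
  exact main_calc
    (fun a : Fin (Fintype.card F / 2 + 1) → F =>
      ∀ x : { x : F // x ∈ H }, ∑ i, a i * (x.1 : F) ^ (i : ℕ) = w x)
    (fun a => fun x : { x : F // x ∈ H } => ∑ i, a i * (x.1 : F) ^ (i : ℕ)) w B EB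
    (fun a => (funext_iff).symm)
    (fun a b => by
      funext x
      simp [add_mul, Finset.sum_add_distrib])
    (fun a b => by
      funext β
      simp [hEB, add_mul, Finset.sum_add_distrib])
    hEEsur
    (fun c β => (PMF.map (fun u : Fin m → Bool =>
        fun j : { j : Fin m // j ∈ Qb β } => u j.1) (Dyes' c))
      (fun j => y ⟨(β, j.1), (Finset.mem_filter.mp j.2).2⟩))
    (fun β => (PMF.map (fun u : Fin m → Bool =>
        fun j : { j : Fin m // j ∈ Qb β } => u j.1) Dno')
      (fun j => y ⟨(β, j.1), (Finset.mem_filter.mp j.2).2⟩))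
    (fun a β => ∑ i, a i * (β.1 : F) ^ (i : ℕ))
    (fun a β => rfl)
    (fun c β hβ => by
      have hle : (Qb β).card ≤ q' := by
        rw [hBdef] at hβ
        simp only [Finset.mem_filter, Finset.mem_univ, true_and, not_lt] at hβ
        exact hβ
      beta_reduce
      rw [hblock c (Qb β) hle])
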